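/- The NMRG with co-safe LTL specifications is equivalent to its extended Markov game: with τ(q⃗,s) = s and ρ(s) = (q_{10},…,q_{M0},s), (1) τ(ρ(s)) = s for all s ∈ S; (2) for all s₁, s₂ ∈ S and s₁' ∈ S' with P(s₁,u,s₂) > 0 and τ(s₁') = s₁, there exists a unique s₂' ∈ S' with τ(s₂') = s₂ and P'(s₁',u,s₂') = P(s₁,u,s₂); and (3) for every feasible trajectory ⟨s₀,u₁,…,u_l,s_l⟩ of the NMRG and the weakly correspondent trajectory ⟨s₀',u₁,…,u_l,s_l'⟩ of the extended game with ρ(s₀) = s₀' and τ(s_t') = s_t for all t, the non-Markovian reward R̄(⟨s₀,u₁,…,u_l,s_l⟩) equals the reward R' collected at the final transition of ⟨s₀',u₁,…,u_l,s_l'⟩, provided each DFA A_k accepts exactly the finite traces over 2^AP satisfying φ_k. -/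
import Mathlib


/-- LTL formulas over atoms `α`, with constants `tt`/`ff`, negation, conjunction,
disjunction, next `○` and until `U`. -/
inductive LTL (α : Type) : Type where
  | tt : LTL α
  | ff : LTL α
  | atom : α → LTL α
  | not : LTL α → LTL α
  | and : LTL α → LTL α → LTL α
  | or : LTL α → LTL α → LTL α
  | next : LTL α → LTL α
  | untl : LTL α → LTL α → LTL α

/-- Satisfaction `⟨σ,i⟩ ⊨ φ` over infinite traces `σ : ℕ → Set α`. -/
def SatInf {α : Type} (σ : ℕ → Set α) : ℕ → LTL α → Prop
  | _, .tt => True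
  | _, .ff => False
  | i, .atom p => p ∈ σ i
  | i, .not φ => ¬ SatInf σ i φ
  | i, .and φ ψ => SatInf σ i φ ∧ SatInf σ i ψ
  | i, .or φ ψ => SatInf σ i φ ∨ SatInf σ i ψ
  | i, .next φ => SatInf σ (i + 1) φ
  | i, .untl φ ψ => ∃ j, i ≤ j ∧ SatInf σ j ψ ∧ ∀ k, i ≤ k → k < j → SatInf σ k φ

/-- Satisfaction `⟨σ,i⟩ ⊨ φ` over finite traces `σ : List (Set α)`;
positions of `σ` are the indices `< σ.length`. -/
def SatFin {α : Type} (σ : List (Set α)) : ℕ → LTL α → Prop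
  | _, .tt => True
  | _, .ff => False
  | i, .atom p => p ∈ σ.getD i ∅
  | i, .not φ => ¬ SatFin σ i φ
  | i, .and φ ψ => SatFin σ i φ ∧ SatFin σ i ψ
  | i, .or φ ψ => SatFin σ i φ ∨ SatFin σ i ψ
  | i, .next φ => i + 1 < σ.length ∧ SatFin σ (i + 1) φ
  | i, .untl φ ψ =>
      ∃ j, i ≤ j ∧ j < σ.length ∧ SatFin σ j ψ ∧ ∀ k, i ≤ k → k < j → SatFin σ k φ

/-- The co-safe fragment of LTL: negation on atoms only. -/
inductive CoSafe {α : Type} : LTL α → Prop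
  | atom (p : α) : CoSafe (.atom p)
  | natom (p : α) : CoSafe (.not (.atom p))
  | and {φ ψ : LTL α} : CoSafe φ → CoSafe ψ → CoSafe (.and φ ψ)
  | or {φ ψ : LTL α} : CoSafe φ → CoSafe ψ → CoSafe (.or φ ψ)
  | next {φ : LTL α} : CoSafe φ → CoSafe (.next φ)
  | untl {φ ψ : LTL α} : CoSafe φ → CoSafe ψ → CoSafe (.untl φ ψ)

/-- The finite prefix `σ₀, …, σᵢ` of an infinite trace `σ`. -/
def prefixUpTo {α : Type} (σ : ℕ → Set α) (i : ℕ) : List (Set α) :=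
  (List.range (i + 1)).map σ

/-- Concatenation `w · σ'` of a finite trace with an infinite trace. -/
def appendInf {α : Type} (w : List (Set α)) (σ' : ℕ → Set α) : ℕ → Set α :=
  fun n => w.getD n (σ' (n - w.length))

open Classical in
/-- The extended transition function `P'` of the extended Markov game:
`P'((q⃗,s), u, (q⃗',s')) = P(s,u,s')` if `q'_k = δ_k(q_k, L(s'))` for all `k`,
and `0` otherwise.  States of the extended game are pairs in `(∀ k, Q k) × S`. -/
noncomputable def Pext {S U AP : Type} {M : ℕ} (Q : Fin M → Type)
    (δ : ∀ k : Fin M, Q k → Set AP → Q k) (L : S → Set AP)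
    (P : S → U → S → ℝ) (x : (∀ k, Q k) × S) (u : U)
    (x' : (∀ k, Q k) × S) : ℝ :=
  if ∀ k, x'.1 k = δ k (x.1 k) (L x'.2) then P x.2 u x'.2 else 0

open Classical in
/-- The NMRG with co-safe LTL specifications is equivalent to its
extended Markov game, with τ(q⃗,s) = s and ρ(s) = (q⃗₀,s):
(1) τ(ρ(s)) = s for all s;
(2) every transition of positive probability lifts uniquely to the extended game;
(3) for every feasible NMRG trajectory and the weakly correspondent feasible
trajectory of the extended game starting at ρ(s₀), the non-Markovian reward
equals the reward R' collected at the final transition, provided each DFA A_k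
accepts exactly the finite traces over 2^AP satisfying φ_k. -/
theorem nmrg_equivalent_to_extended_markov_game {S U AP : Type} {M : ℕ}
    (Q : Fin M → Type) (δ : ∀ k : Fin M, Q k → Set AP → Q k)
    (q₀ : ∀ k, Q k) (F : ∀ k : Fin M, Set (Q k)) (L : S → Set AP)
    (P : S → U → S → ℝ)
    (hP01 : ∀ (s : S) (u : U) (s' : S), P s u s' ∈ Set.Icc (0 : ℝ) 1)
    (r : Fin M → ℝ) (φ : Fin M → LTL AP) (hφ : ∀ k, CoSafe (φ k))
    (hdfa : ∀ (k : Fin M) (w : List (Set AP)),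
        w.foldl (δ k) (q₀ k) ∈ F k ↔ SatFin w 0 (φ k)) :
    -- (1) τ ∘ ρ = id
    (∀ s : S, (((q₀, s) : (∀ k, Q k) × S)).2 = s) ∧
    -- (2) unique lifting of positive-probability transitions
    (∀ (s₁ s₂ : S) (u : U) (x₁ : (∀ k, Q k) × S),
        0 < P s₁ u s₂ → x₁.2 = s₁ →
        ∃! x₂ : (∀ k, Q k) × S,
          x₂.2 = s₂ ∧ Pext Q δ L P x₁ u x₂ = P s₁ u s₂) ∧
    -- (3) equal rewards on strongly correspondent feasible trajectories
    (∀ (l : ℕ), 1 ≤ l → ∀ (s : ℕ → S) (u : ℕ → U)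
        (x : ℕ → (∀ k, Q k) × S),
        (∀ t < l, 0 < P (s t) (u t) (s (t + 1))) →
        x 0 = (q₀, s 0) →
        (∀ t ≤ l, (x t).2 = s t) →
        (∀ t < l, 0 < Pext Q δ L P (x t) (u t) (x (t + 1))) →
        (∑ k : Fin M,
            if SatFin ((List.range l).map (fun t => L (s (t + 1)))) 0 (φ k)
              then r k else 0)
          = ∑ k : Fin M, if (x l).1 k ∈ F k then r k else 0) := by
  refine ⟨fun s => rfl, ?_, ?_⟩
  · intro s₁ s₂ u x₁ hpos hx₁
    refine ⟨(fun k => δ k (x₁.1 k) (L s₂), s₂), ⟨rfl, ?_⟩, ?_⟩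
    · simp [Pext, hx₁]
    · rintro ⟨g, y⟩ ⟨hy, hPe⟩
      dsimp at hy; subst hy
      have hcond : ∀ k, g k = δ k (x₁.1 k) (L y) := by
        by_contra h
        simp only [Pext, if_neg h] at hPe
        exact absurd hPe (ne_of_lt hpos)
      exact Prod.ext (funext hcond) rfl
  · intro l hl s u x hfeas hx0 hτ hfeas'
    have key : ∀ t ≤ l, ∀ k, (x t).1 k =
        ((List.range t).map (fun i => L (s (i + 1)))).foldl (δ k) (q₀ k) := by
      intro t
      induction t with
      | zero => intro _ k; simp [hx0]
      | succ n ih =>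
        intro hle k
        have hn : n ≤ l := Nat.le_of_succ_le hle
        have hstep := hfeas' n (Nat.lt_of_succ_le hle)
        have hcond : ∀ k, (x (n+1)).1 k = δ k ((x n).1 k) (L ((x (n+1)).2)) := by
          by_contra h
          simp [Pext, h] at hstep
        have := hcond k
        rw [hτ (n+1) hle] at this
        rw [List.range_succ, List.map_append, List.foldl_append]
        simp only [List.map_cons, List.map_nil, List.foldl_cons, List.foldl_nil]
        rw [this, ih hn k]
    refine Finset.sum_congr rfl fun k _ => ?_
    have h1 := (hdfa k ((List.range l).map (fun t => L (s (t + 1)))))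
    have h2 := key l le_rfl k
    rw [h2]
    by_cases hs : SatFin ((List.range l).map (fun t => L (s (t + 1)))) 0 (φ k)
    · rw [if_pos hs, if_pos (h1.mpr hs)]
    · rw [if_neg hs, if_neg (fun hm => hs (h1.mp hm))]
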